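/- arXiv:1305.4795 — 3 statements merged into one kernel-verified Lean document; each statement's English description precedes it below -/
import Mathlib

section
/- Let T be a real-valued random variable with the normal distribution N(μ, σ²), σ > 0, let α ∈ (0,1) and λ ∈ [0,1], and let ξ(α) = μ + σ·Φ⁻¹(α). Define the alpha-reliable combined mean travel time ψ(α; λ) = λ·E[T | T ≤ ξ(α)] + (1−λ)·E[T | T ≥ ξ(α)]. Then ψ(α; λ) = μ + ((α−λ)·σ/(√(2π)·α·(1−α)))·exp(−[Φ⁻¹(α)]²/2). -/
open MeasureTheory ProbabilityTheory

/-- The cumulative distribution function `Φ` of the standard normal distribution. -/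
noncomputable def stdNormalCDF (y : ℝ) : ℝ :=
  ∫ x in Set.Iic y, (Real.sqrt (2 * Real.pi))⁻¹ * Real.exp (-(x ^ 2) / 2)

open Real Filter Set

lemma stdphi_eq : gaussianPDFReal 0 1
    = fun u : ℝ => (Real.sqrt (2 * Real.pi))⁻¹ * Real.exp (-u ^ 2 / 2) := by
  ext u
  simp [gaussianPDFReal]

lemma stdphi_hasDeriv (u : ℝ) :
    HasDerivAt (fun u : ℝ => -((Real.sqrt (2 * Real.pi))⁻¹ * Real.exp (-u ^ 2 / 2)))
      (u * ((Real.sqrt (2 * Real.pi))⁻¹ * Real.exp (-u ^ 2 / 2))) u := by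
  have h1 : HasDerivAt (fun u : ℝ => -u ^ 2 / 2) (-(2 * u) / 2) u := by
    have := (hasDerivAt_pow 2 u).neg.div_const 2
    exact this.congr_deriv (by norm_num)
  have h2 := ((h1.exp).const_mul ((Real.sqrt (2 * Real.pi))⁻¹)).neg
  exact h2.congr_deriv (by ring)

lemma stdphi_tendsto {lf : Filter ℝ} (h : Tendsto (fun u : ℝ => u ^ 2) lf atTop) :
    Tendsto (fun u : ℝ => -((Real.sqrt (2 * Real.pi))⁻¹ * Real.exp (-u ^ 2 / 2))) lf (nhds 0) := by
  have hsq : Tendsto (fun u : ℝ => -u ^ 2 / 2) lf atBot := by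
    apply Tendsto.atBot_div_const (by norm_num : (0:ℝ) < 2)
    exact tendsto_neg_atBot_iff.mpr h
  have := ((Real.tendsto_exp_atBot.comp hsq).const_mul ((Real.sqrt (2 * Real.pi))⁻¹)).neg
  simpa using this

lemma sq_tendsto_atBot : Tendsto (fun u : ℝ => u ^ 2) atBot atTop := by
  have := (tendsto_pow_atTop (two_ne_zero (α := ℕ))).comp (tendsto_abs_atBot_atTop (G := ℝ))
  refine this.congr fun u => ?_
  simp [sq_abs]

lemma stdphi_integrable_mul : Integrable (fun u : ℝ => u * gaussianPDFReal 0 1 u) := by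
  rw [stdphi_eq]
  have h := (integrable_mul_exp_neg_mul_sq (show (0:ℝ) < 1/2 by norm_num)).const_mul
    ((Real.sqrt (2 * Real.pi))⁻¹)
  refine h.congr (Filter.Eventually.of_forall fun u => ?_)
  simp only []
  rw [show -(1/2 : ℝ) * u ^ 2 = -u ^ 2 / 2 by ring]
  ring

lemma I_Iic (x : ℝ) : ∫ u in Set.Iic x, u * gaussianPDFReal 0 1 u
    = -((Real.sqrt (2 * Real.pi))⁻¹ * Real.exp (-x ^ 2 / 2)) := by
  rw [stdphi_eq]
  have := integral_Iic_of_hasDerivAt_of_tendsto' (a := x) (fun u _ => stdphi_hasDeriv u)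
    ((stdphi_integrable_mul.congr (Filter.Eventually.of_forall fun u => by rw [stdphi_eq])).integrableOn)
    (stdphi_tendsto sq_tendsto_atBot)
  simpa using this

lemma I_Ici (x : ℝ) : ∫ u in Set.Ici x, u * gaussianPDFReal 0 1 u
    = (Real.sqrt (2 * Real.pi))⁻¹ * Real.exp (-x ^ 2 / 2) := by
  rw [stdphi_eq, integral_Ici_eq_integral_Ioi]
  have := integral_Ioi_of_hasDerivAt_of_tendsto' (a := x) (fun u _ => stdphi_hasDeriv u)
    ((stdphi_integrable_mul.congr (Filter.Eventually.of_forall fun u => by rw [stdphi_eq])).integrableOn)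
    (stdphi_tendsto (tendsto_pow_atTop (two_ne_zero (α := ℕ))))
  simpa using this

/-- Equation (4) of the paper: for `T ~ N(μ, σ²)`, `α ∈ (0,1)`, `λ ∈ [0,1]` and
`ξ(α) = μ + σ·Φ⁻¹(α)`, the alpha-reliable combined mean travel time
`ψ(α; λ) = λ·E[T ∣ T ≤ ξ(α)] + (1−λ)·E[T ∣ T ≥ ξ(α)]` satisfies
`ψ(α; λ) = μ + ((α−λ)·σ/(√(2π)·α·(1−α)))·exp(−[Φ⁻¹(α)]²/2)`.
Here `x` plays the role of `Φ⁻¹(α)` and `l` the role of `λ`, and conditional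
expectations are unravelled as `E[T ∣ A] = (∫_A T dP)/P(A)`. -/
theorem gaussian_combined_mean_travel_time
    {Ω : Type*} [MeasurableSpace Ω] (P : Measure Ω) [IsProbabilityMeasure P]
    (T : Ω → ℝ) (hTmeas : Measurable T)
    (μ σ : ℝ) (hσ : 0 < σ)
    (hT : Measure.map T P = gaussianReal μ ⟨σ ^ 2, sq_nonneg σ⟩)
    (α : ℝ) (hα : α ∈ Set.Ioo (0 : ℝ) 1)
    (l : ℝ) (hl : l ∈ Set.Icc (0 : ℝ) 1)
    (x : ℝ) (hx : stdNormalCDF x = α) :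
    l * ((∫ ω in {ω | T ω ≤ μ + σ * x}, T ω ∂P) / (P {ω | T ω ≤ μ + σ * x}).toReal)
      + (1 - l) *
        ((∫ ω in {ω | μ + σ * x ≤ T ω}, T ω ∂P) / (P {ω | μ + σ * x ≤ T ω}).toReal)
      = μ + (α - l) * σ / (Real.sqrt (2 * Real.pi) * α * (1 - α))
          * Real.exp (-x ^ 2 / 2) := by
  obtain ⟨hα0, hα1⟩ := hα
  set c := μ + σ * x with hc
  have hf_meas : Measurable (fun u : ℝ => σ * u + μ) := (measurable_id.const_mul σ).add_const μ
  -- map identification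
  have hmap : Measure.map T P = Measure.map (fun u => σ * u + μ) (gaussianReal 0 1) := by
    rw [hT]
    have h1 : Measure.map (fun u => σ * u) (gaussianReal 0 1)
        = gaussianReal 0 ⟨σ ^ 2, sq_nonneg σ⟩ := by
      have := gaussianReal_map_const_mul (μ := 0) (v := 1) σ
      simp at this
      rw [this]
      congr 2
    have h2 : Measure.map (· + μ) (gaussianReal 0 ⟨σ ^ 2, sq_nonneg σ⟩)
        = gaussianReal μ ⟨σ ^ 2, sq_nonneg σ⟩ := by
      simpa using gaussianReal_map_add_const (μ := 0) (v := ⟨σ ^ 2, sq_nonneg σ⟩) μ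
    rw [← h2, ← h1, Measure.map_map (measurable_add_const μ) (measurable_const_mul σ)]
    rfl
  have hpre_le : (fun u : ℝ => σ * u + μ) ⁻¹' (Set.Iic c) = Set.Iic x := by
    ext u
    simp only [Set.mem_preimage, Set.mem_Iic, hc]
    constructor <;> intro h <;> nlinarith
  have hpre_ge : (fun u : ℝ => σ * u + μ) ⁻¹' (Set.Ici c) = Set.Ici x := by
    ext u
    simp only [Set.mem_preimage, Set.mem_Ici, hc]
    constructor <;> intro h <;> nlinarith
  -- real integrals of the standard pdf
  have hα_int : ∫ u in Set.Iic x, gaussianPDFReal 0 1 u = α := by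
    rw [stdphi_eq, ← hx]; rfl
  have htot : ∫ u, gaussianPDFReal 0 1 u = 1 := integral_gaussianPDFReal_eq_one 0 one_ne_zero
  have hint_φ : Integrable (gaussianPDFReal 0 1) := integrable_gaussianPDFReal 0 1
  have h1mα : ∫ u in Set.Ici x, gaussianPDFReal 0 1 u = 1 - α := by
    rw [integral_Ici_eq_integral_Ioi]
    have := intervalIntegral.integral_Iic_add_Ioi (b := x) (μ := volume) hint_φ.integrableOn hint_φ.integrableOn
    linarith [hα_int, htot]
  -- measures of the two events
  have hmeas_le : P {ω | T ω ≤ c} = ENNReal.ofReal α := by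
    have hset : {ω | T ω ≤ c} = T ⁻¹' (Set.Iic c) := rfl
    rw [hset, ← Measure.map_apply hTmeas measurableSet_Iic, hmap,
      Measure.map_apply hf_meas measurableSet_Iic, hpre_le,
      gaussianReal_apply_eq_integral 0 one_ne_zero, hα_int]
  have hmeas_ge : P {ω | c ≤ T ω} = ENNReal.ofReal (1 - α) := by
    have hset : {ω | c ≤ T ω} = T ⁻¹' (Set.Ici c) := rfl
    rw [hset, ← Measure.map_apply hTmeas measurableSet_Ici, hmap,
      Measure.map_apply hf_meas measurableSet_Ici, hpre_ge,
      gaussianReal_apply_eq_integral 0 one_ne_zero, h1mα]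
  -- set-integrals over the standard gaussian as real integrals
  have hstdwd : gaussianReal 0 1
      = volume.withDensity (fun u => ((gaussianPDFReal 0 1 u).toNNReal : ENNReal)) := by
    rw [gaussianReal_of_var_ne_zero 0 one_ne_zero]
    rfl
  have key : ∀ s : Set ℝ, MeasurableSet s →
      ∫ u in s, (σ * u + μ) ∂(gaussianReal 0 1)
        = σ * (∫ u in s, u * gaussianPDFReal 0 1 u) + μ * (∫ u in s, gaussianPDFReal 0 1 u) := by
    intro s hs
    rw [hstdwd, setIntegral_withDensity_eq_setIntegral_smul
      (measurable_gaussianPDFReal 0 1).real_toNNReal _ hs]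
    have heq : ∀ u : ℝ, (gaussianPDFReal 0 1 u).toNNReal • (σ * u + μ)
        = σ * (u * gaussianPDFReal 0 1 u) + μ * gaussianPDFReal 0 1 u := by
      intro u
      rw [NNReal.smul_def, Real.coe_toNNReal _ (gaussianPDFReal_nonneg 0 1 u), smul_eq_mul]
      ring
    simp_rw [heq]
    rw [integral_add ((stdphi_integrable_mul.restrict).const_mul σ)
      ((hint_φ.restrict).const_mul μ), integral_const_mul, integral_const_mul]
  -- the two conditional numerators
  have hval_le : ∫ ω in {ω | T ω ≤ c}, T ω ∂P
      = σ * (-((Real.sqrt (2 * Real.pi))⁻¹ * Real.exp (-x ^ 2 / 2))) + μ * α := by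
    have hset : {ω | T ω ≤ c} = T ⁻¹' (Set.Iic c) := rfl
    have h1 := setIntegral_map (f := fun y : ℝ => y) (g := T) (μ := P)
      measurableSet_Iic measurable_id.aestronglyMeasurable hTmeas.aemeasurable (s := Set.Iic c)
    have h2 := setIntegral_map (f := fun y : ℝ => y) (g := fun u : ℝ => σ * u + μ)
      (μ := gaussianReal 0 1) measurableSet_Iic measurable_id.aestronglyMeasurable
      hf_meas.aemeasurable (s := Set.Iic c)
    beta_reduce at h1 h2
    rw [hset, ← h1, hmap, h2, hpre_le, key _ measurableSet_Iic, I_Iic, hα_int]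
  have hval_ge : ∫ ω in {ω | c ≤ T ω}, T ω ∂P
      = σ * ((Real.sqrt (2 * Real.pi))⁻¹ * Real.exp (-x ^ 2 / 2)) + μ * (1 - α) := by
    have hset : {ω | c ≤ T ω} = T ⁻¹' (Set.Ici c) := rfl
    have h1 := setIntegral_map (f := fun y : ℝ => y) (g := T) (μ := P)
      measurableSet_Ici measurable_id.aestronglyMeasurable hTmeas.aemeasurable (s := Set.Ici c)
    have h2 := setIntegral_map (f := fun y : ℝ => y) (g := fun u : ℝ => σ * u + μ)
      (μ := gaussianReal 0 1) measurableSet_Ici measurable_id.aestronglyMeasurable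
      hf_meas.aemeasurable (s := Set.Ici c)
    beta_reduce at h1 h2
    rw [hset, ← h1, hmap, h2, hpre_ge, key _ measurableSet_Ici, I_Ici, h1mα]
  rw [hval_le, hval_ge, hmeas_le, hmeas_ge, ENNReal.toReal_ofReal hα0.le,
    ENNReal.toReal_ofReal (by linarith)]
  have hs : (0:ℝ) < Real.sqrt (2 * Real.pi) := Real.sqrt_pos.2 (by positivity)
  have hαne : α ≠ 0 := hα0.ne'
  have h1αne : (1:ℝ) - α ≠ 0 := by linarith
  have hsne : Real.sqrt (2 * Real.pi) ≠ 0 := hs.ne'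
  field_simp
  ring
end

section
/- Let T be a real-valued random variable with the normal distribution N(μ, σ²), σ > 0, let α ∈ (0,1) and λ ∈ [0,1], let ξ(α) = μ + σ·Φ⁻¹(α), and let ψ(α; λ) = λ·E[T | T ≤ ξ(α)] + (1−λ)·E[T | T ≥ ξ(α)] be the alpha-reliable combined mean travel time. Then ψ(α; λ) < μ if and only if λ > α, ψ(α; λ) = μ if and only if λ = α, and ψ(α; λ) > μ if and only if λ < α. In particular, CMTT is risk-optimistic (below the mean) when λ > α, risk-neutral when λ = α, and risk-pessimistic (above the mean) when λ < α. -/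
open MeasureTheory ProbabilityTheory
open Real Filter Set
open scoped NNReal ENNReal

noncomputable def stdPhi (s : ℝ) : ℝ := (Real.sqrt (2 * Real.pi))⁻¹ * Real.exp (-(s ^ 2) / 2)

lemma stdPhi_pos (s : ℝ) : 0 < stdPhi s := by
  unfold stdPhi
  have h : (0:ℝ) < Real.sqrt (2 * Real.pi) := Real.sqrt_pos.2 (by positivity)
  positivity

lemma gaussianPDFReal_zero_one (s : ℝ) : gaussianPDFReal 0 1 s = stdPhi s := by
  simp [gaussianPDFReal, stdPhi, neg_div]

lemma integrable_stdPhi : Integrable stdPhi := by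
  have h := (integrable_exp_neg_mul_sq (by norm_num : (0:ℝ) < 1/2)).const_mul
    (Real.sqrt (2 * Real.pi))⁻¹
  refine h.congr (ae_of_all _ fun s => ?_)
  show (Real.sqrt (2 * Real.pi))⁻¹ * Real.exp (-(1/2) * s ^ 2) = stdPhi s
  unfold stdPhi
  rw [show -(1/2 : ℝ) * s ^ 2 = -(s ^ 2) / 2 by ring]

lemma integrable_mul_stdPhi : Integrable (fun s => s * stdPhi s) := by
  have h := (integrable_mul_exp_neg_mul_sq (by norm_num : (0:ℝ) < 1/2)).const_mul
    (Real.sqrt (2 * Real.pi))⁻¹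
  refine h.congr (ae_of_all _ fun s => ?_)
  show (Real.sqrt (2 * Real.pi))⁻¹ * (s * Real.exp (-(1/2) * s ^ 2)) = s * stdPhi s
  unfold stdPhi
  rw [show -(1/2 : ℝ) * s ^ 2 = -(s ^ 2) / 2 by ring]
  ring

lemma hasDerivAt_negStdPhi (s : ℝ) : HasDerivAt (fun t => -stdPhi t) (s * stdPhi s) s := by
  have h0 := ((hasDerivAt_pow 2 s).neg).div_const 2
  have h1 : HasDerivAt (fun t : ℝ => -(t ^ 2) / 2) (-s) s := by
    exact h0.congr_deriv (by ring)
  have h2 := (h1.exp.const_mul (Real.sqrt (2 * Real.pi))⁻¹).neg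
  exact h2.congr_deriv (by unfold stdPhi; ring)

lemma tendsto_sq_atBot : Tendsto (fun s : ℝ => s ^ 2) atBot atTop := by
  have h1 : Tendsto (fun x : ℝ => x ^ 2) atTop atTop := tendsto_pow_atTop two_ne_zero
  have h2 : Tendsto (Neg.neg : ℝ → ℝ) atBot atTop := tendsto_neg_atBot_atTop
  have := h1.comp h2
  exact this.congr fun s => neg_sq s

lemma tendsto_stdPhi_aux {lf : Filter ℝ} (h : Tendsto (fun s : ℝ => s ^ 2) lf atTop) :
    Tendsto stdPhi lf (nhds 0) := by
  have h1 : Tendsto (fun s : ℝ => -(s ^ 2) / 2) lf atBot :=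
    (tendsto_neg_atTop_atBot.comp h).atBot_div_const two_pos
  have h2 := (Real.tendsto_exp_atBot.comp h1).const_mul (Real.sqrt (2 * Real.pi))⁻¹
  rw [mul_zero] at h2
  exact h2

lemma tendsto_stdPhi_atTop : Tendsto stdPhi atTop (nhds 0) :=
  tendsto_stdPhi_aux (tendsto_pow_atTop two_ne_zero)

lemma tendsto_stdPhi_atBot : Tendsto stdPhi atBot (nhds 0) :=
  tendsto_stdPhi_aux tendsto_sq_atBot

lemma integral_Iic_mul_stdPhi (y : ℝ) : ∫ s in Set.Iic y, s * stdPhi s = -stdPhi y := by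
  have := integral_Iic_of_hasDerivAt_of_tendsto' (a := y) (f := fun t => -stdPhi t)
    (f' := fun s => s * stdPhi s) (m := 0)
    (fun s _ => hasDerivAt_negStdPhi s)
    (integrable_mul_stdPhi.integrableOn)
    (by simpa using tendsto_stdPhi_atBot.neg)
  simpa using this

lemma integral_Ioi_mul_stdPhi (y : ℝ) : ∫ s in Set.Ioi y, s * stdPhi s = stdPhi y := by
  have := integral_Ioi_of_hasDerivAt_of_tendsto' (a := y) (f := fun t => -stdPhi t)
    (f' := fun s => s * stdPhi s) (m := 0)
    (fun s _ => hasDerivAt_negStdPhi s)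
    (integrable_mul_stdPhi.integrableOn)
    (by simpa using tendsto_stdPhi_atTop.neg)
  simpa using this

lemma integral_stdPhi_univ : ∫ s, stdPhi s = 1 := by
  have h := integral_gaussianPDFReal_eq_one 0 (v := 1) one_ne_zero
  rw [← h]
  exact integral_congr_ae (ae_of_all _ fun s => (gaussianPDFReal_zero_one s).symm)

lemma stdNormalCDF_eq (y : ℝ) : stdNormalCDF y = ∫ s in Set.Iic y, stdPhi s := rfl

lemma gaussianReal_eq_withDensity :
    gaussianReal 0 1 = volume.withDensity fun s => ((Real.toNNReal (stdPhi s) : ℝ≥0) : ℝ≥0∞) := by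
  rw [gaussianReal_of_var_ne_zero 0 one_ne_zero]
  congr 1
  funext s
  rw [gaussianPDF, gaussianPDFReal_zero_one]
  rfl

lemma measurable_stdPhi : Measurable stdPhi := by
  rw [show stdPhi = gaussianPDFReal 0 1 from funext fun t => (gaussianPDFReal_zero_one t).symm]
  exact measurable_gaussianPDFReal 0 1

lemma setIntegral_gaussian_eq (s : Set ℝ) (hs : MeasurableSet s) (g : ℝ → ℝ) :
    ∫ t in s, g t ∂(gaussianReal 0 1) = ∫ t in s, stdPhi t * g t := by
  rw [gaussianReal_eq_withDensity,
    setIntegral_withDensity_eq_setIntegral_smul measurable_stdPhi.real_toNNReal g hs]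
  refine setIntegral_congr_fun hs fun t _ => ?_
  rw [NNReal.smul_def, Real.coe_toNNReal _ (stdPhi_pos t).le, smul_eq_mul]

lemma gaussianReal_apply_Iic (y : ℝ) :
    gaussianReal 0 1 (Set.Iic y) = ENNReal.ofReal (∫ s in Set.Iic y, stdPhi s) := by
  rw [gaussianReal_apply_eq_integral 0 one_ne_zero]
  congr 1
  exact setIntegral_congr_fun measurableSet_Iic fun s _ => gaussianPDFReal_zero_one s

lemma gaussianReal_apply_Ici (y : ℝ) :
    gaussianReal 0 1 (Set.Ici y) = ENNReal.ofReal (∫ s in Set.Ici y, stdPhi s) := by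
  rw [gaussianReal_apply_eq_integral 0 one_ne_zero]
  congr 1
  exact setIntegral_congr_fun measurableSet_Ici fun s _ => gaussianPDFReal_zero_one s

/-- For `T ~ N(μ, σ²)`, `α ∈ (0,1)`, `λ ∈ [0,1]` and `ξ(α) = μ + σ·Φ⁻¹(α)`, the
alpha-reliable combined mean travel time
`ψ(α; λ) = λ·E[T ∣ T ≤ ξ(α)] + (1−λ)·E[T ∣ T ≥ ξ(α)]` satisfies:
`ψ(α; λ) < μ ↔ λ > α`, `ψ(α; λ) = μ ↔ λ = α`, and `ψ(α; λ) > μ ↔ λ < α`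
(risk-optimistic, risk-neutral, risk-pessimistic respectively).
Here `x` plays the role of `Φ⁻¹(α)` and `l` the role of `λ`, and conditional
expectations are unravelled as `E[T ∣ A] = (∫_A T dP)/P(A)`. -/
theorem gaussian_cmtt_risk_attitude_trichotomy
    {Ω : Type*} [MeasurableSpace Ω] (P : Measure Ω) [IsProbabilityMeasure P]
    (T : Ω → ℝ) (hTmeas : Measurable T)
    (μ σ : ℝ) (hσ : 0 < σ)
    (hT : Measure.map T P = gaussianReal μ ⟨σ ^ 2, sq_nonneg σ⟩)
    (α : ℝ) (hα : α ∈ Set.Ioo (0 : ℝ) 1)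
    (l : ℝ) (hl : l ∈ Set.Icc (0 : ℝ) 1)
    (x : ℝ) (hx : stdNormalCDF x = α)
    (ψ : ℝ)
    (hψ : ψ = l * ((∫ ω in {ω | T ω ≤ μ + σ * x}, T ω ∂P)
                      / (P {ω | T ω ≤ μ + σ * x}).toReal)
            + (1 - l) * ((∫ ω in {ω | μ + σ * x ≤ T ω}, T ω ∂P)
                      / (P {ω | μ + σ * x ≤ T ω}).toReal)) :
    (ψ < μ ↔ α < l) ∧ (ψ = μ ↔ l = α) ∧ (μ < ψ ↔ l < α) := by
  obtain ⟨hα0, hα1⟩ := hα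
  set ξ : ℝ := μ + σ * x with hξ
  set c : ℝ := stdPhi x with hc
  have hcpos : 0 < c := stdPhi_pos x
  set e : ℝ → ℝ := fun s => σ * s + μ with he_def
  have he : Measurable e := (measurable_const_mul σ).add_const μ
  set γ : Measure ℝ := gaussianReal 0 1 with hγ
  -- the map identity
  have hmap : Measure.map e γ = gaussianReal μ ⟨σ ^ 2, sq_nonneg σ⟩ := by
    have h1 : Measure.map (fun s : ℝ => σ * s) γ
        = gaussianReal 0 ⟨σ ^ 2, sq_nonneg σ⟩ := by
      have := gaussianReal_map_const_mul (μ := 0) (v := 1) σ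
      rw [hγ, this]
      congr 1
      · simp
      · ext
        simp
        rfl
    have h2 : Measure.map (· + μ) (gaussianReal 0 ⟨σ ^ 2, sq_nonneg σ⟩)
        = gaussianReal μ ⟨σ ^ 2, sq_nonneg σ⟩ := by
      have := gaussianReal_map_add_const (μ := 0) (v := ⟨σ ^ 2, sq_nonneg σ⟩) μ
      simpa using this
    have he' : e = (· + μ) ∘ (fun s : ℝ => σ * s) := rfl
    rw [he', ← Measure.map_map (measurable_add_const μ) (measurable_const_mul σ), h1, h2]
  -- preimages
  have hPreIic : e ⁻¹' (Set.Iic ξ) = Set.Iic x := by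
    ext s
    simp only [Set.mem_preimage, Set.mem_Iic, he_def, hξ]
    constructor <;> intro h <;> nlinarith
  have hPreIci : e ⁻¹' (Set.Ici ξ) = Set.Ici x := by
    ext s
    simp only [Set.mem_preimage, Set.mem_Ici, he_def, hξ]
    constructor <;> intro h <;> nlinarith
  -- the standard normal integrals
  have hIic : ∫ s in Set.Iic x, stdPhi s = α := by rw [← stdNormalCDF_eq, hx]
  have hIci : ∫ s in Set.Ici x, stdPhi s = 1 - α := by
    rw [integral_Ici_eq_integral_Ioi]
    have hsplit := intervalIntegral.integral_Iic_add_Ioi (b := x) (f := stdPhi) (μ := volume)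
      integrable_stdPhi.integrableOn integrable_stdPhi.integrableOn
    rw [integral_stdPhi_univ, hIic] at hsplit
    linarith
  -- probabilities
  have hmapT : ∀ s : Set ℝ, MeasurableSet s → P (T ⁻¹' s) = γ (e ⁻¹' s) := by
    intro s hs
    rw [← Measure.map_apply hTmeas hs, hT, ← hmap, Measure.map_apply he hs]
  have hPS1 : P {ω | T ω ≤ ξ} = ENNReal.ofReal α := by
    have : {ω | T ω ≤ ξ} = T ⁻¹' (Set.Iic ξ) := rfl
    rw [this, hmapT _ measurableSet_Iic, hPreIic, hγ, gaussianReal_apply_Iic, hIic]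
  have hPS2 : P {ω | ξ ≤ T ω} = ENNReal.ofReal (1 - α) := by
    have : {ω | ξ ≤ T ω} = T ⁻¹' (Set.Ici ξ) := rfl
    rw [this, hmapT _ measurableSet_Ici, hPreIci, hγ, gaussianReal_apply_Ici, hIci]
  -- set integrals of T
  have hintT : ∀ s : Set ℝ, MeasurableSet s →
      ∫ ω in T ⁻¹' s, T ω ∂P = ∫ t in e ⁻¹' s, e t ∂γ := by
    intro s hs
    have h1 : ∫ t in s, t ∂(Measure.map T P) = ∫ ω in T ⁻¹' s, T ω ∂P :=
      setIntegral_map hs measurable_id.aestronglyMeasurable hTmeas.aemeasurable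
    have h2 : ∫ t in s, t ∂(Measure.map e γ) = ∫ t in e ⁻¹' s, e t ∂γ :=
      setIntegral_map hs measurable_id.aestronglyMeasurable he.aemeasurable
    rw [← h1, hT, ← hmap, h2]
  have key : ∀ s : Set ℝ, MeasurableSet s →
      ∫ t in s, stdPhi t * (σ * t + μ)
        = σ * (∫ t in s, t * stdPhi t) + μ * ∫ t in s, stdPhi t := by
    intro s hs
    have heq : ∀ t, stdPhi t * (σ * t + μ) = σ * (t * stdPhi t) + μ * stdPhi t :=
      fun t => by ring
    rw [show (fun t => stdPhi t * (σ * t + μ)) = fun t => σ * (t * stdPhi t) + μ * stdPhi t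
        from funext heq]
    rw [integral_add ((integrable_mul_stdPhi.const_mul σ).integrableOn)
      ((integrable_stdPhi.const_mul μ).integrableOn), integral_const_mul, integral_const_mul]
  have hA : ∫ ω in {ω | T ω ≤ ξ}, T ω ∂P = μ * α - σ * c := by
    have : {ω | T ω ≤ ξ} = T ⁻¹' (Set.Iic ξ) := rfl
    rw [this, hintT _ measurableSet_Iic, hPreIic, hγ,
      setIntegral_gaussian_eq _ measurableSet_Iic, key _ measurableSet_Iic,
      integral_Iic_mul_stdPhi, hIic]
    ring
  have hB : ∫ ω in {ω | ξ ≤ T ω}, T ω ∂P = μ * (1 - α) + σ * c := by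
    have : {ω | ξ ≤ T ω} = T ⁻¹' (Set.Ici ξ) := rfl
    rw [this, hintT _ measurableSet_Ici, hPreIci, hγ,
      setIntegral_gaussian_eq _ measurableSet_Ici, key _ measurableSet_Ici,
      integral_Ici_eq_integral_Ioi, integral_Ioi_mul_stdPhi, hIci]
    ring
  -- put together
  have hψval : ψ = l * ((μ * α - σ * c) / α) + (1 - l) * ((μ * (1 - α) + σ * c) / (1 - α)) := by
    rw [hψ, hA, hB, hPS1, hPS2, ENNReal.toReal_ofReal hα0.le,
      ENNReal.toReal_ofReal (by linarith : (0:ℝ) ≤ 1 - α)]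
  set k : ℝ := σ * c / (α * (1 - α)) with hk
  have hkpos : 0 < k := by
    apply div_pos (by positivity)
    nlinarith
  have hα0' : α ≠ 0 := hα0.ne'
  have h1α : (1:ℝ) - α ≠ 0 := ne_of_gt (by linarith)
  have hψμ : ψ - μ = k * (α - l) := by
    rw [hψval, hk]
    field_simp
    ring
  refine ⟨⟨fun h => ?_, fun h => ?_⟩, ⟨fun h => ?_, fun h => ?_⟩, ⟨fun h => ?_, fun h => ?_⟩⟩
  · by_contra h'
    push_neg at h'
    have : 0 ≤ k * (α - l) := mul_nonneg hkpos.le (by linarith)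
    linarith
  · have : k * (α - l) < 0 := mul_neg_of_pos_of_neg hkpos (by linarith)
    linarith
  · have h0 : k * (α - l) = 0 := by linarith
    have := (mul_eq_zero.1 h0).resolve_left hkpos.ne'
    linarith
  · have : k * (α - l) = 0 := by rw [h]; ring
    linarith
  · by_contra h'
    push_neg at h'
    have : k * (α - l) ≤ 0 := mul_nonpos_of_nonneg_of_nonpos hkpos.le (by linarith)
    linarith
  · have : 0 < k * (α - l) := mul_pos hkpos (by linarith)
    linarith
end

section
/- Let T be a real-valued random variable with the normal distribution N(μ, σ²), σ > 0, and let α ∈ (0,1). With ξ(α) = μ + σ·Φ⁻¹(α), the alpha-reliable mean-excess travel time is strictly larger than the mean travel time for every α ∈ (0,1): E[T | T ≥ ξ(α)] > μ. (METT is a universally risk-pessimistic travel time index.) -/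
open MeasureTheory ProbabilityTheory

open Real Set Filter
open scoped NNReal ENNReal

lemma aux_int0 (v : ℝ≥0) (hv : v ≠ 0) :
    Integrable (fun t : ℝ => t * gaussianPDFReal 0 v t) := by
  have h2v : (0:ℝ) < (2 * (v:ℝ))⁻¹ := by
    have : (0:ℝ) < v := by positivity
    positivity
  have h := (integrable_mul_exp_neg_mul_sq h2v).const_mul (√(2 * π * v))⁻¹
  refine h.congr ?_
  · filter_upwards with t
    simp only [gaussianPDFReal]
    ring_nf

lemma aux_int_sub (μ : ℝ) (v : ℝ≥0) (hv : v ≠ 0) :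
    Integrable (fun t : ℝ => (t - μ) * gaussianPDFReal μ v t) := by
  have h := (aux_int0 v hv).comp_sub_right μ
  refine h.congr ?_
  filter_upwards with t
  congr 1
  rw [gaussianPDFReal_sub, zero_add]

lemma aux_int_id (μ : ℝ) (v : ℝ≥0) (hv : v ≠ 0) :
    Integrable (fun t : ℝ => t * gaussianPDFReal μ v t) := by
  have h := (aux_int_sub μ v hv).add ((integrable_gaussianPDFReal μ v).const_mul μ)
  refine h.congr ?_
  filter_upwards with t
  simp only [Pi.add_apply]
  ring

lemma aux_setint_pos (μ : ℝ) (v : ℝ≥0) (hv : v ≠ 0) (ξ : ℝ) :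
    0 < ∫ t in Ici ξ, (t - μ) * gaussianPDFReal μ v t := by
  have hvR : (0:ℝ) < v := by positivity
  set c : ℝ := (√(2 * π * v))⁻¹ with hc
  have hcpos : 0 < c := by rw [hc]; positivity
  have hderiv : ∀ t ∈ Ici ξ, HasDerivAt (fun t : ℝ => -(v:ℝ) * gaussianPDFReal μ v t)
      ((t - μ) * gaussianPDFReal μ v t) t := by
    intro t _
    have h1 : HasDerivAt (fun t : ℝ => -(t - μ)^2 / (2 * v)) (-(t-μ)/v) t := by
      have : HasDerivAt (fun t : ℝ => t - μ) 1 t := (hasDerivAt_id t).sub_const μ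
      have h2 := ((this.pow 2).neg).div_const (2 * (v:ℝ))
      refine h2.congr_deriv ?_
      field_simp
      ring
    have h3 := (h1.exp.const_mul c).const_mul (-(v:ℝ))
    refine h3.congr_deriv ?_
    have hvne : (v:ℝ) ≠ 0 := ne_of_gt hvR
    simp only [gaussianPDFReal]
    rw [hc]
    generalize rexp (-(t - μ) ^ 2 / (2 * (v:ℝ))) = E
    generalize (√(2 * π * (v:ℝ)))⁻¹ = C
    field_simp
  have htend : Tendsto (fun t : ℝ => -(v:ℝ) * gaussianPDFReal μ v t) atTop (nhds 0) := by
    have h1 : Tendsto (fun t : ℝ => -(t - μ)^2 / (2 * v)) atTop atBot := by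
      apply Tendsto.atBot_div_const (by positivity)
      apply tendsto_neg_atTop_atBot.comp
      exact (tendsto_pow_atTop (by norm_num)).comp (tendsto_atTop_add_const_right _ _ tendsto_id)
    have h2 := (Real.tendsto_exp_atBot.comp h1).const_mul c
    rw [mul_zero] at h2
    have h2' : Tendsto (fun t : ℝ => gaussianPDFReal μ v t) atTop (nhds 0) := h2
    have h3 := h2'.const_mul (-(v:ℝ))
    rw [mul_zero] at h3
    exact h3
  have hint : IntegrableOn (fun t : ℝ => (t - μ) * gaussianPDFReal μ v t) (Ioi ξ) :=
    (aux_int_sub μ v hv).integrableOn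
  have := integral_Ioi_of_hasDerivAt_of_tendsto' hderiv hint htend
  rw [integral_Ici_eq_integral_Ioi, this]
  have := gaussianPDFReal_pos μ v ξ hv
  nlinarith

lemma aux_setint (μ : ℝ) {v : ℝ≥0} (hv : v ≠ 0) (g : ℝ → ℝ) {s : Set ℝ} (hs : MeasurableSet s) :
    ∫ t in s, g t ∂(gaussianReal μ v) = ∫ t in s, g t * gaussianPDFReal μ v t := by
  rw [gaussianReal_of_var_ne_zero μ hv, restrict_withDensity hs]
  have h : gaussianPDF μ v = fun t => ((Real.toNNReal (gaussianPDFReal μ v t) : ℝ≥0) : ℝ≥0∞) :=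
    rfl
  rw [h, integral_withDensity_eq_integral_smul (measurable_gaussianPDFReal μ v).real_toNNReal g]
  congr 1
  ext t
  rw [NNReal.smul_def, smul_eq_mul, Real.coe_toNNReal _ (gaussianPDFReal_nonneg μ v t), mul_comm]

/-- For `T ~ N(μ, σ²)` and every `α ∈ (0,1)`, with `ξ(α) = μ + σ·Φ⁻¹(α)`, the
alpha-reliable mean-excess travel time is strictly above the mean:
`E[T ∣ T ≥ ξ(α)] > μ` (METT is a universally risk-pessimistic index).
Here `x` plays the role of `Φ⁻¹(α)`, and the conditional expectation is
unravelled as `E[T ∣ A] = (∫_A T dP)/P(A)`. -/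
theorem gaussian_mett_gt_mean
    {Ω : Type*} [MeasurableSpace Ω] (P : Measure Ω) [IsProbabilityMeasure P]
    (T : Ω → ℝ) (hTmeas : Measurable T)
    (μ σ : ℝ) (hσ : 0 < σ)
    (hT : Measure.map T P = gaussianReal μ ⟨σ ^ 2, sq_nonneg σ⟩)
    (α : ℝ) (hα : α ∈ Set.Ioo (0 : ℝ) 1)
    (x : ℝ) (hx : stdNormalCDF x = α) :
    μ < (∫ ω in {ω | μ + σ * x ≤ T ω}, T ω ∂P) / (P {ω | μ + σ * x ≤ T ω}).toReal := by
  set v : ℝ≥0 := ⟨σ ^ 2, sq_nonneg σ⟩ with hvdef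
  have hvR : (v : ℝ) = σ ^ 2 := rfl
  have hv : v ≠ 0 := by
    intro h
    have : (v : ℝ) = 0 := by rw [h]; simp
    rw [hvR] at this
    nlinarith
  set ξ : ℝ := μ + σ * x with hξ
  have hset : {ω | μ + σ * x ≤ T ω} = T ⁻¹' Set.Ici ξ := rfl
  set ν : Measure ℝ := gaussianReal μ v with hν
  -- measure of the tail
  have hPA : P {ω | μ + σ * x ≤ T ω} = ν (Ici ξ) := by
    rw [hset, ← Measure.map_apply hTmeas measurableSet_Ici, hT]
  -- positivity of the tail measure
  have hq0 : ν (Ici ξ) ≠ 0 := by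
    intro h
    have h2 : (volume : Measure ℝ) (Ici ξ) = 0 := gaussianReal_absolutelyContinuous' μ hv h
    rw [Real.volume_Ici] at h2
    exact ENNReal.top_ne_zero h2
  have hqt : ν (Ici ξ) ≠ ⊤ := measure_ne_top ν _
  have hq : 0 < (ν (Ici ξ)).toReal := ENNReal.toReal_pos hq0 hqt
  -- the integral over the tail
  have hIint : ∫ ω in {ω | μ + σ * x ≤ T ω}, T ω ∂P = ∫ t in Ici ξ, t ∂ν := by
    rw [hset, ← hT]
    exact (setIntegral_map measurableSet_Ici aestronglyMeasurable_id hTmeas.aemeasurable).symm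
  -- integrability of id wrt ν
  have hInt : Integrable (fun t : ℝ => t) ν := by
    rw [hν, gaussianReal_of_var_ne_zero μ hv]
    rw [integrable_withDensity_iff (measurable_gaussianPDF μ v)
      (ae_of_all _ fun t => ENNReal.ofReal_lt_top)]
    refine (aux_int_id μ v hv).congr ?_
    filter_upwards with t
    rw [gaussianPDF]
    rw [ENNReal.toReal_ofReal (gaussianPDFReal_nonneg μ v t)]
  -- the centered tail integral is positive
  have hpos : 0 < ∫ t in Ici ξ, (t - μ) ∂ν := by
    rw [hν, aux_setint μ hv _ measurableSet_Ici]
    exact aux_setint_pos μ v hv ξ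
  have hsub : ∫ t in Ici ξ, (t - μ) ∂ν
      = (∫ t in Ici ξ, t ∂ν) - μ * (ν (Ici ξ)).toReal := by
    rw [integral_sub hInt.integrableOn (integrableOn_const (measure_ne_top _ _))]
    rw [setIntegral_const, smul_eq_mul, mul_comm, measureReal_def]
  rw [hIint, hPA, lt_div_iff₀ hq]
  rw [hsub] at hpos
  linarith
end
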